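/- For every k ≥ 3, A k 3 > exp^(4)(k), the fourth iterate of exp applied to k. -/

import Mathlib

/-- The Ackermann function variant: `A 0 n = 2^n`, `A (k+1) 0 = 1`,
`A (k+1) (n+1) = A k (A (k+1) n)`. -/
def A : ℕ → ℕ → ℕ
  | 0, n => 2 ^ n
  | _ + 1, 0 => 1
  | k + 1, n + 1 => A k (A (k + 1) n)

/-- `exp n = 2 ^ n`. -/
def exp (n : ℕ) : ℕ := 2 ^ n

lemma A_zl (n : ℕ) : A 0 n = 2 ^ n := by simp [A]

lemma A_sz (k : ℕ) : A (k+1) 0 = 1 := by simp [A]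

lemma A_ss (k n : ℕ) : A (k+1) (n+1) = A k (A (k+1) n) := by rw [A]

lemma exp_strictMono : StrictMono exp := fun _ _ h => Nat.pow_lt_pow_right one_lt_two h

lemma succ_le_exp (n : ℕ) : n + 1 ≤ exp n := Nat.lt_two_pow_self (n := n)

lemma A_zero_right (k : ℕ) : A k 0 = 1 := by
  cases k with
  | zero => simp [A_zl]
  | succ k => exact A_sz k

lemma succ_le_A : ∀ k n, n + 1 ≤ A k n := by
  intro k
  induction k with
  | zero => intro n; rw [A_zl]; exact Nat.lt_two_pow_self (n := n)
  | succ k ih =>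
    intro n
    induction n with
    | zero => simp [A_sz]
    | succ n ihn =>
      rw [A_ss]
      calc n + 2 ≤ A (k+1) n + 1 := by omega
        _ ≤ A k (A (k+1) n) := ih _

lemma A_mono (k : ℕ) : Monotone (A k) := by
  apply monotone_nat_of_le_succ
  intro n
  cases k with
  | zero =>
    rw [A_zl, A_zl]
    exact le_of_lt (Nat.pow_lt_pow_right one_lt_two (Nat.lt_succ_self n))
  | succ k =>
    rw [A_ss]
    calc A (k+1) n ≤ A (k+1) n + 1 := Nat.le_succ _
      _ ≤ A k (A (k+1) n) := succ_le_A _ _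

lemma A_le_A_succ (k n : ℕ) : A k n ≤ A (k+1) n := by
  cases n with
  | zero => simp [A_zero_right]
  | succ n =>
    rw [A_ss]
    exact A_mono k (succ_le_A _ _)

lemma A_le_A {j k : ℕ} (h : j ≤ k) (n : ℕ) : A j n ≤ A k n := by
  induction h with
  | refl => exact le_rfl
  | step _ ih => exact ih.trans (A_le_A_succ _ _)

lemma A_one_right (k : ℕ) : A k 1 = 2 := by
  induction k with
  | zero => simp [A_zl]
  | succ k ih => rw [show (1:ℕ) = 0 + 1 from rfl, A_ss, A_zero_right, ih]

lemma A_two_right (k : ℕ) : A k 2 = 4 := by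
  induction k with
  | zero => simp [A_zl]
  | succ k ih => rw [show (2:ℕ) = 1 + 1 from rfl, A_ss, A_one_right, ih]

lemma A_one_eq (n : ℕ) : A 1 n = exp^[n] 1 := by
  induction n with
  | zero => simp [A_zero_right]
  | succ n ih =>
    rw [A_ss, Function.iterate_succ_apply', ← ih, A_zl]
    rfl

lemma succ_le_exp_iter_one (j : ℕ) : j + 1 ≤ exp^[j] 1 := by
  induction j with
  | zero => simp
  | succ j ih =>
    rw [Function.iterate_succ_apply']
    calc j + 2 ≤ exp^[j] 1 + 1 := by omega
      _ ≤ exp (exp^[j] 1) := succ_le_exp _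

lemma exp_iter_two_ge (j : ℕ) : 2 * j + 2 ≤ exp^[j] 2 := by
  induction j with
  | zero => simp
  | succ j ih =>
    rw [Function.iterate_succ_apply']
    have h1 : 2 * j + 4 ≤ exp (2 * j + 2) := by
      have := Nat.lt_two_pow_self (n := 2 * j + 1)
      simp only [exp, pow_succ]
      omega
    calc 2 * (j+1) + 2 = 2 * j + 4 := by ring
      _ ≤ exp (2 * j + 2) := h1
      _ ≤ exp (exp^[j] 2) := exp_strictMono.monotone ih

lemma A_one_three : A 1 3 = 16 := by
  rw [A_one_eq]
  simp [Function.iterate_succ_apply', exp]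

lemma A_three_ge (m : ℕ) : exp^[m+2] 2 ≤ A (m+1) 3 := by
  induction m with
  | zero =>
    rw [A_one_three]
    simp [Function.iterate_succ_apply', exp]
  | succ m ih =>
    have e1 : A (m+2) 3 = A (m+1) 4 := by
      rw [show (3:ℕ) = 2 + 1 from rfl, A_ss, A_two_right]
    have e2 : A (m+1) 4 = A m (A (m+1) 3) := by
      rw [show (4:ℕ) = 3 + 1 from rfl, A_ss]
    have h1 : A (m+2) 3 = A m (A (m+1) 3) := e1.trans e2
    calc exp^[m+3] 2 = exp (exp^[m+2] 2) := Function.iterate_succ_apply' _ _ _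
      _ ≤ exp (A (m+1) 3) := exp_strictMono.monotone ih
      _ = A 0 (A (m+1) 3) := by rw [A_zl]; rfl
      _ ≤ A m (A (m+1) 3) := A_le_A (Nat.zero_le m) _
      _ = A (m+2) 3 := h1.symm

theorem A_k_three_gt (k : ℕ) (hk : 3 ≤ k) : A k 3 > exp^[4] k := by
  obtain ⟨m, rfl⟩ := Nat.exists_eq_add_of_le hk
  have e1 : A (3 + m) 3 = A (m+2) 4 := by
    rw [show 3 + m = (m + 2) + 1 by ring,
      show (3:ℕ) = 2 + 1 from rfl, A_ss, A_two_right]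
  have e2 : A (m+2) 4 = A (m+1) (A (m+2) 3) := by
    rw [show (4:ℕ) = 3 + 1 from rfl, A_ss]
  have h1 : A (3 + m) 3 = A (m+1) (A (m+2) 3) := e1.trans e2
  set N := A (m+2) 3 with hN
  have hNge : 2 * (m+3) + 2 ≤ N := le_trans (exp_iter_two_ge (m+3)) (A_three_ge (m+1))
  have h2 : A 1 N ≤ A (m+1) N := A_le_A (by omega) N
  have h3 : A 1 N = exp^[N] 1 := A_one_eq N
  have hsplit : exp^[N] 1 = exp^[4] (exp^[N-4] 1) := by
    conv_lhs => rw [show N = 4 + (N - 4) by omega]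
    exact Function.iterate_add_apply exp 4 (N-4) 1
  have hbig : 3 + m < exp^[N-4] 1 := by
    have := succ_le_exp_iter_one (N - 4)
    omega
  calc exp^[4] (3 + m) < exp^[4] (exp^[N-4] 1) := (exp_strictMono.iterate 4) hbig
    _ = exp^[N] 1 := hsplit.symm
    _ = A 1 N := h3.symm
    _ ≤ A (m+1) N := h2
    _ = A (3 + m) 3 := h1.symm
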